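/- arXiv:0705.0938 — 2 statements merged into one kernel-verified Lean document; each statement's English description precedes it below -/
import Mathlib

section
/- A connected graph has metric dimension 1 if and only if it is a path on at least 2 vertices. -/
/-- `S` resolves `G` if every pair of distinct vertices has different
distances to some vertex of `S`. -/
def Resolves {V : Type*} (G : SimpleGraph V) (S : Set V) : Prop :=
  ∀ v w : V, v ≠ w → ∃ x ∈ S, G.dist v x ≠ G.dist w x

/-- The metric dimension: the minimum cardinality of a resolving set. -/
noncomputable def metricDim {V : Type*} (G : SimpleGraph V) : ℕ :=
  sInf {n | ∃ S : Set V, Resolves G S ∧ S.ncard = n}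

lemma iso_dist_le {V W : Type*} {G : SimpleGraph V} {G' : SimpleGraph W}
    (e : G ≃g G') (u v : V) : G'.dist (e u) (e v) ≤ G.dist u v := by
  by_cases h : G.Reachable u v
  · obtain ⟨p, hp⟩ := h.exists_walk_length_eq_dist
    calc G'.dist (e u) (e v) ≤ (p.map e.toHom).length := SimpleGraph.dist_le _
      _ = G.dist u v := by rw [SimpleGraph.Walk.length_map, hp]
  · rw [SimpleGraph.dist_eq_zero_of_not_reachable h,
      SimpleGraph.dist_eq_zero_of_not_reachable (by rwa [SimpleGraph.Iso.reachable_iff])]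

lemma iso_dist_eq {V W : Type*} {G : SimpleGraph V} {G' : SimpleGraph W}
    (e : G ≃g G') (u v : V) : G'.dist (e u) (e v) = G.dist u v := by
  refine le_antisymm (iso_dist_le e u v) ?_
  have := iso_dist_le e.symm (e u) (e v)
  simpa using this

lemma pathGraph_walk_ge {n : ℕ} {i j : Fin n} (p : (SimpleGraph.pathGraph n).Walk i j) :
    i.val ≤ j.val + p.length ∧ j.val ≤ i.val + p.length := by
  induction p with
  | nil => simp
  | @cons a b c h q ih =>
    rw [SimpleGraph.pathGraph_adj] at h
    simp only [SimpleGraph.Walk.length_cons]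
    omega

lemma pathGraph_dist_le {n : ℕ} (k : ℕ) (i : Fin (n + 1)) (hk : i.val = k) :
    (SimpleGraph.pathGraph (n + 1)).dist i 0 ≤ k := by
  induction k generalizing i with
  | zero =>
    have : i = 0 := Fin.ext (by simpa using hk)
    simp [this]
  | succ k ih =>
    have hlt : k < n + 1 := by omega
    have hadj : (SimpleGraph.pathGraph (n + 1)).Adj i ⟨k, hlt⟩ := by
      rw [SimpleGraph.pathGraph_adj]; right; simp [hk]
    have h1 : (SimpleGraph.pathGraph (n + 1)).dist i ⟨k, hlt⟩ = 1 :=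
      SimpleGraph.dist_eq_one_iff_adj.mpr hadj
    have h2 := (SimpleGraph.pathGraph_connected n).dist_triangle
      (u := i) (v := ⟨k, hlt⟩) (w := 0)
    have h3 := ih ⟨k, hlt⟩ rfl
    omega

lemma pathGraph_dist_zero {n : ℕ} (i : Fin (n + 1)) :
    (SimpleGraph.pathGraph (n + 1)).dist i 0 = i.val := by
  refine le_antisymm (pathGraph_dist_le i.val i rfl) ?_
  obtain ⟨p, hp⟩ := (SimpleGraph.pathGraph_connected n).exists_walk_length_eq_dist i 0
  have := (pathGraph_walk_ge p).1
  simp only [Fin.val_zero] at this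
  omega

lemma finset_range_of_closed (S : Finset ℕ) (h : ∀ k, k + 1 ∈ S → k ∈ S) :
    S = Finset.range S.card := by
  have hdown : ∀ d k, k + d ∈ S → k ∈ S := by
    intro d
    induction d with
    | zero => exact fun k hk => by simpa using hk
    | succ d ih =>
      intro k hk
      exact h k (ih (k + 1) (by rw [show k + 1 + d = k + (d + 1) by omega]; exact hk))
  rcases S.eq_empty_or_nonempty with rfl | hne
  · simp
  · set M := S.max' hne with hM
    have hsub : S = Finset.range (M + 1) := by
      ext k
      simp only [Finset.mem_range, Nat.lt_succ_iff]
      constructor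
      · exact fun hk => S.le_max' k hk
      · intro hk
        exact hdown (M - k) k (by rw [show k + (M - k) = M by omega]; exact S.max'_mem hne)
    rw [hsub, Finset.card_range]

theorem metricDim_eq_one_iff_path {V : Type*} [Fintype V] (G : SimpleGraph V)
    (hG : G.Connected) :
    metricDim G = 1 ↔ ∃ n : ℕ, 2 ≤ n ∧ Nonempty (G ≃g SimpleGraph.pathGraph n) := by
  classical
  constructor
  · intro h1
    have h1' : sInf {n | ∃ S : Set V, Resolves G S ∧ S.ncard = n} = 1 := h1
    have hne : {n | ∃ S : Set V, Resolves G S ∧ S.ncard = n}.Nonempty := by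
      by_contra hc
      rw [Set.not_nonempty_iff_eq_empty] at hc
      rw [hc, Nat.sInf_empty] at h1'
      omega
    have hmem := Nat.sInf_mem hne
    obtain ⟨S, hS, hcard⟩ := hmem
    have hc1 : S.ncard = 1 := hcard.trans h1'
    obtain ⟨x, rfl⟩ := Set.ncard_eq_one.mp hc1
    -- the distance-to-x map is injective
    have hinj : Function.Injective (fun v => G.dist v x) := by
      intro v w hvw
      by_contra hne'
      obtain ⟨y, hy, hdy⟩ := hS v w hne'
      rw [Set.mem_singleton_iff] at hy
      subst hy
      exact hdy hvw
    set N := Fintype.card V with hN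
    set f : V → ℕ := fun v => G.dist v x with hf
    -- step down along shortest paths
    have step : ∀ (v : V) (k : ℕ), G.dist v x = k + 1 → ∃ u, G.Adj v u ∧ G.dist u x = k := by
      intro v k hv
      obtain ⟨p, hp⟩ := (hG v x).exists_walk_length_eq_dist
      cases p with
      | nil =>
        rw [hv] at hp
        simp at hp
      | @cons _ u _ hadj q =>
        refine ⟨u, hadj, ?_⟩
        have hq : G.dist u x ≤ q.length := SimpleGraph.dist_le q
        have hlen : q.length + 1 = G.dist v x := by
          simpa [SimpleGraph.Walk.length_cons] using hp
        have htri := hG.dist_triangle (u := v) (v := u) (w := x)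
        have hvu : G.dist v u = 1 := SimpleGraph.dist_eq_one_iff_adj.mpr hadj
        omega
    -- image of f is an initial segment
    set Sf : Finset ℕ := Finset.image f Finset.univ with hSf
    have hcardS : Sf.card = N := by
      rw [hSf, Finset.card_image_of_injective _ hinj, Finset.card_univ]
    have hclosed : ∀ k, k + 1 ∈ Sf → k ∈ Sf := by
      intro k hk
      simp only [hSf, Finset.mem_image, Finset.mem_univ, true_and] at hk ⊢
      obtain ⟨v, hv⟩ := hk
      obtain ⟨u, _, hu⟩ := step v k hv
      exact ⟨u, hu⟩
    have hrange : Sf = Finset.range N := by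
      rw [finset_range_of_closed Sf hclosed, hcardS]
    have hlt : ∀ v, f v < N := by
      intro v
      have : f v ∈ Sf := Finset.mem_image_of_mem f (Finset.mem_univ v)
      rwa [hrange, Finset.mem_range] at this
    -- the bijection with Fin N
    set F : V → Fin N := fun v => ⟨f v, hlt v⟩ with hF
    have hFinj : Function.Injective F := by
      intro v w h
      exact hinj (by simpa [hF] using congrArg Fin.val h)
    have hFbij : Function.Bijective F :=
      (Fintype.bijective_iff_injective_and_card F).mpr ⟨hFinj, (Fintype.card_fin N).symm⟩
    -- adjacency characterization
    have hadj_iff : ∀ v w, G.Adj v w ↔ (f v + 1 = f w ∨ f w + 1 = f v) := by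
      intro v w
      constructor
      · intro hvw
        have h2 := hG.dist_triangle (u := v) (v := w) (w := x)
        have h3 := hG.dist_triangle (u := w) (v := v) (w := x)
        have hvw1 : G.dist v w = 1 := SimpleGraph.dist_eq_one_iff_adj.mpr hvw
        have hwv1 : G.dist w v = 1 := by rwa [SimpleGraph.dist_comm] at hvw1
        have hne' : f v ≠ f w := fun h => hvw.ne (hinj h)
        simp only [hf] at hne' ⊢
        omega
      · rintro (h | h)
        · obtain ⟨u, hu, hux⟩ := step w (f v) (by simpa only [hf] using h.symm)
          have : u = v := hinj hux
          subst this
          exact hu.symm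
        · obtain ⟨u, hu, hux⟩ := step v (f w) (by simpa only [hf] using h.symm)
          have : u = w := hinj hux
          subst this
          exact hu
    refine ⟨N, ?_, ⟨?_⟩⟩
    · -- 2 ≤ N
      by_contra hN2
      push_neg at hN2
      have hsub : ∀ v w : V, v = w := fun v w =>
        Fintype.card_le_one_iff.mp (by omega) v w
      have h0 : Resolves G (∅ : Set V) := fun v w hvw => absurd (hsub v w) hvw
      have hm : (0 : ℕ) ∈ {n | ∃ S : Set V, Resolves G S ∧ S.ncard = n} :=
        ⟨∅, h0, by simp⟩
      have := Nat.sInf_le hm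
      omega
    · exact
        { toEquiv := Equiv.ofBijective F hFbij
          map_rel_iff' := by
            intro v w
            rw [SimpleGraph.pathGraph_adj]
            exact (hadj_iff v w).symm }
  · rintro ⟨n, hn2, ⟨e⟩⟩
    obtain ⟨m, rfl⟩ : ∃ m, n = m + 2 := ⟨n - 2, by omega⟩
    have hx0 : ∀ v : V, G.dist v (e.symm 0) = (e v).val := by
      intro v
      have h := iso_dist_eq e v (e.symm 0)
      rw [RelIso.apply_symm_apply] at h
      rw [← h, pathGraph_dist_zero]
    have h1mem : (1 : ℕ) ∈ {n | ∃ S : Set V, Resolves G S ∧ S.ncard = n} := by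
      refine ⟨{e.symm 0}, ?_, Set.ncard_singleton _⟩
      intro v w hvw
      refine ⟨e.symm 0, Set.mem_singleton _, ?_⟩
      rw [hx0, hx0]
      intro hval
      exact hvw (e.toEquiv.injective (Fin.ext hval))
    have h0notmem : (0 : ℕ) ∉ {n | ∃ S : Set V, Resolves G S ∧ S.ncard = n} := by
      rintro ⟨S, hS, hS0⟩
      have hSe : S = ∅ := (Set.ncard_eq_zero (Set.toFinite S)).mp hS0
      subst hSe
      have hne : e.symm 0 ≠ e.symm 1 := fun h =>
        absurd (e.symm.toEquiv.injective h) Fin.zero_ne_one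
      obtain ⟨y, hy, _⟩ := hS _ _ hne
      exact hy
    have hle := Nat.sInf_le h1mem
    have h0 : sInf {n | ∃ S : Set V, Resolves G S ∧ S.ncard = n} ≠ 0 := by
      intro h
      rcases Nat.sInf_eq_zero.mp h with h | h
      · exact h0notmem h
      · rw [h] at h1mem
        exact h1mem
    show sInf {n | ∃ S : Set V, Resolves G S ∧ S.ncard = n} = 1
    omega
end

section
/- Let G be a connected graph with diameter D ≥ 3, order n, and metric dimension β(G) = n − D. Then there exists a vertex u_0 of G with eccentricity D that has no twin. -/
/-- Two distinct vertices are twins if they have the same open neighbourhood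
or the same closed neighbourhood. -/
def Twins {V : Type*} (G : SimpleGraph V) (u v : V) : Prop :=
  u ≠ v ∧ ((∀ x, G.Adj u x ↔ G.Adj v x) ∨ (∀ x, (G.Adj u x ∨ u = x) ↔ (G.Adj v x ∨ v = x)))

/-- The diameter: the maximum distance between two vertices. -/
noncomputable def gdiam {V : Type*} (G : SimpleGraph V) : ℕ :=
  sSup {d | ∃ u v : V, G.dist u v = d}

/-- The eccentricity of a vertex: the maximum distance from it to any vertex. -/
noncomputable def ecc {V : Type*} (G : SimpleGraph V) (v : V) : ℕ :=
  sSup {d | ∃ w : V, G.dist v w = d}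

section Helpers

variable {V : Type*} {G : SimpleGraph V}

lemma adj_dist_le_one' {a b : V} (h : G.Adj a b) : G.dist a b ≤ 1 :=
  le_of_eq (SimpleGraph.dist_eq_one_iff_adj.mpr h)

lemma dist_getVert_le' (hG : G.Connected) {a b : V} (p : G.Walk a b) (i : ℕ) :
    G.dist a (p.getVert i) ≤ i := by
  induction i with
  | zero => simp
  | succ i ih =>
    have hstep : G.dist (p.getVert i) (p.getVert (i+1)) ≤ 1 := by
      by_cases hi : i < p.length
      · exact adj_dist_le_one' (p.adj_getVert_succ hi)
      · rw [p.getVert_of_length_le (by omega), p.getVert_of_length_le (by omega)]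
        simp [SimpleGraph.dist_self]
    calc G.dist a (p.getVert (i+1))
        ≤ G.dist a (p.getVert i) + G.dist (p.getVert i) (p.getVert (i+1)) := hG.dist_triangle
      _ ≤ i + 1 := add_le_add ih hstep

lemma geo_dist' (hG : G.Connected) {a b : V} (p : G.Walk a b) (hp : p.length = G.dist a b)
    {i : ℕ} (hi : i ≤ p.length) :
    G.dist a (p.getVert i) = i ∧ G.dist (p.getVert i) b = p.length - i := by
  have h1 : G.dist a (p.getVert i) ≤ i := dist_getVert_le' hG p i
  have h2 : G.dist (p.getVert i) b ≤ p.length - i := by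
    have := dist_getVert_le' hG p.reverse (p.length - i)
    rw [p.getVert_reverse] at this
    have hii : p.length - (p.length - i) = i := by omega
    rw [hii] at this
    rwa [G.dist_comm]
  have h3 : G.dist a b ≤ G.dist a (p.getVert i) + G.dist (p.getVert i) b := hG.dist_triangle
  constructor <;> omega

lemma exists_adj_dist' (hG : G.Connected) {u x : V} (h : G.dist u x ≠ 0) :
    ∃ a, G.Adj u a ∧ G.dist a x = G.dist u x - 1 := by
  obtain ⟨p, hp⟩ := (hG.preconnected u x).exists_walk_length_eq_dist
  have hlen : 0 < p.length := by omega
  refine ⟨p.getVert 1, ?_, ?_⟩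
  · have := p.adj_getVert_succ hlen
    rwa [p.getVert_zero] at this
  · have := (geo_dist' hG p hp (by omega : 1 ≤ p.length)).2
    rw [this, hp]

lemma twins_symm' {u v : V} (h : Twins G u v) : Twins G v u :=
  ⟨h.1.symm, h.2.imp (fun h x => (h x).symm) (fun h x => (h x).symm)⟩

lemma twins_dist_le' (hG : G.Connected) {u v x : V} (h : Twins G u v)
    (hxu : x ≠ u) : G.dist v x ≤ G.dist u x := by
  have hux : G.dist u x ≠ 0 := (hG.pos_dist_of_ne (Ne.symm hxu)).ne'
  obtain ⟨a, ha, hd⟩ := exists_adj_dist' hG hux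
  rcases h.2 with ho | hc
  · have hva : G.Adj v a := (ho a).mp ha
    calc G.dist v x ≤ G.dist v a + G.dist a x := hG.dist_triangle
      _ ≤ 1 + (G.dist u x - 1) := add_le_add (adj_dist_le_one' hva) (le_of_eq hd)
      _ ≤ G.dist u x := by omega
  · rcases (hc a).mp (Or.inl ha) with hva | rfl
    · calc G.dist v x ≤ G.dist v a + G.dist a x := hG.dist_triangle
        _ ≤ 1 + (G.dist u x - 1) := add_le_add (adj_dist_le_one' hva) (le_of_eq hd)
        _ ≤ G.dist u x := by omega
    · omega

lemma twins_dist_eq' (hG : G.Connected) {u v x : V} (h : Twins G u v)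
    (hxu : x ≠ u) (hxv : x ≠ v) : G.dist u x = G.dist v x :=
  le_antisymm (twins_dist_le' hG (twins_symm' h) hxv) (twins_dist_le' hG h hxu)

lemma twins_dist_le_two' (hG : G.Connected) {u v a : V} (h : Twins G u v)
    (ha : G.Adj u a) : G.dist u v ≤ 2 := by
  rcases h.2 with ho | hc
  · have hva : G.Adj v a := (ho a).mp ha
    calc G.dist u v ≤ G.dist u a + G.dist a v := hG.dist_triangle
      _ ≤ 1 + 1 := add_le_add (adj_dist_le_one' ha) (adj_dist_le_one' hva.symm)
      _ ≤ 2 := by omega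
  · rcases (hc u).mp (Or.inr rfl) with hvu | rfl
    · have := adj_dist_le_one' hvu.symm
      omega
    · exact absurd rfl h.1

end Helpers

theorem exists_eccentric_without_twin {V : Type*} [Fintype V] (G : SimpleGraph V)
    (hG : G.Connected) (D : ℕ) (hD : 3 ≤ D) (hdiam : gdiam G = D)
    (hdim : metricDim G = Fintype.card V - D) :
    ∃ u : V, ecc G u = D ∧ ∀ v : V, ¬ Twins G u v := by
  classical
  -- the set of distances is finite
  have hSdeq : {d | ∃ u v : V, G.dist u v = d} = Set.range (fun p : V × V => G.dist p.1 p.2) := by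
    ext d
    constructor
    · rintro ⟨u, v, h⟩; exact ⟨(u, v), h⟩
    · rintro ⟨⟨u, v⟩, h⟩; exact ⟨u, v, h⟩
  have hSdfin : {d | ∃ u v : V, G.dist u v = d}.Finite := by
    rw [hSdeq]; exact Set.finite_range _
  have hSdbdd : BddAbove {d | ∃ u v : V, G.dist u v = d} := hSdfin.bddAbove
  have hSdne : {d | ∃ u v : V, G.dist u v = d}.Nonempty := by
    by_contra h
    rw [Set.not_nonempty_iff_eq_empty] at h
    rw [gdiam, h] at hdiam
    simp at hdiam
    omega
  have hDmem : D ∈ {d | ∃ u v : V, G.dist u v = d} := by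
    rw [← hdiam]; exact Nat.sSup_mem hSdne hSdbdd
  obtain ⟨u0, uD, huD⟩ := hDmem
  have hdist_le : ∀ a b : V, G.dist a b ≤ D := by
    intro a b
    rw [← hdiam]
    exact le_csSup hSdbdd ⟨a, b, rfl⟩
  -- eccentricity
  have hecc : ∀ z zD : V, G.dist z zD = D → ecc G z = D := by
    intro z zD h
    have hbdd : BddAbove {d | ∃ w : V, G.dist z w = d} := by
      refine Set.Finite.bddAbove ?_
      have : {d | ∃ w : V, G.dist z w = d} = Set.range (fun w : V => G.dist z w) := by
        ext d; exact ⟨fun ⟨w, hw⟩ => ⟨w, hw⟩, fun ⟨w, hw⟩ => ⟨w, hw⟩⟩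
      rw [this]; exact Set.finite_range _
    refine le_antisymm ?_ ?_
    · exact csSup_le ⟨D, zD, h⟩ (by rintro d ⟨w, rfl⟩; exact hdist_le z w)
    · exact le_csSup hbdd ⟨zD, h⟩
  -- a geodesic
  obtain ⟨p, hp⟩ := (hG.preconnected u0 uD).exists_walk_length_eq_dist
  have hplen : p.length = D := by rw [hp, huD]
  set g : ℕ → V := p.getVert with hg
  have g0 : g 0 = u0 := p.getVert_zero
  have gD : g D = uD := by rw [hg, ← hplen]; exact p.getVert_length
  have gd0 : ∀ i ≤ D, G.dist u0 (g i) = i := by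
    intro i hi
    exact (geo_dist' hG p hp (by omega)).1
  have gdD : ∀ i ≤ D, G.dist (g i) uD = D - i := by
    intro i hi
    have := (geo_dist' hG p hp (by omega : i ≤ p.length)).2
    rwa [hplen] at this
  have gadj : ∀ i < D, G.Adj (g i) (g (i + 1)) := by
    intro i hi
    exact p.adj_getVert_succ (by omega)
  have ginj : ∀ i ≤ D, ∀ j ≤ D, g i = g j → i = j := by
    intro i hi j hj hij
    have h1 := gd0 i hi
    have h2 := gd0 j hj
    rw [hij] at h1
    omega
  -- the order is at least D + 1
  have hcardV : D + 1 ≤ Fintype.card V := by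
    have : Function.Injective (fun i : Fin (D + 1) => g i) := by
      intro i j hij
      exact Fin.ext (ginj i (by omega) j (by omega) hij)
    simpa using Fintype.card_le_of_injective _ this
  -- main case split
  by_cases h0 : ∀ v, ¬ Twins G u0 v
  · exact ⟨u0, hecc u0 uD huD, h0⟩
  by_cases hDt : ∀ v, ¬ Twins G uD v
  · exact ⟨uD, hecc uD u0 (by rwa [G.dist_comm]), hDt⟩
  exfalso
  push_neg at h0 hDt
  obtain ⟨v, hv⟩ := h0
  obtain ⟨w, hw⟩ := hDt
  -- basic facts about the twins
  have hu0uD : G.dist u0 uD ≠ 0 := by omega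
  obtain ⟨a0, ha0, -⟩ := exists_adj_dist' hG hu0uD
  have huDu0 : G.dist uD u0 ≠ 0 := by rw [G.dist_comm]; omega
  obtain ⟨aD, haD, -⟩ := exists_adj_dist' hG huDu0
  have hkv : G.dist u0 v ≤ 2 := twins_dist_le_two' hG hv ha0
  have hkw : G.dist uD w ≤ 2 := twins_dist_le_two' hG hw haD
  have hkv1 : 1 ≤ G.dist u0 v := hG.pos_dist_of_ne hv.1
  have hkw1 : 1 ≤ G.dist uD w := hG.pos_dist_of_ne hw.1
  -- v is not on the geodesic
  have hadj_le : ∀ {a b : V}, (G.Adj a b ∨ a = b) → G.dist a b ≤ 1 := by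
    rintro a b (h | rfl)
    · exact adj_dist_le_one' h
    · simp [SimpleGraph.dist_self]
  have hv_not_g : ∀ i ≤ D, v ≠ g i := by
    intro i hi heq
    have hdvi : G.dist u0 v = i := by rw [heq]; exact gd0 i hi
    have hia : 1 ≤ i := by omega
    have hib : i ≤ 2 := by omega
    interval_cases i
    · -- v = g 1
      rcases hv.2 with ho | hc
      · have hadj : G.Adj u0 v := by rw [heq, ← g0]; exact gadj 0 (by omega)
        exact G.irrefl ((ho v).mp hadj)
      · have hadj : G.Adj v (g 2) := by rw [heq]; exact gadj 1 (by omega)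
        have := hadj_le ((hc (g 2)).mpr (Or.inl hadj))
        have := gd0 2 (by omega)
        omega
    · -- v = g 2
      rcases hv.2 with ho | hc
      · have hadj : G.Adj v (g 3) := by rw [heq]; exact gadj 2 (by omega)
        have h2 : G.Adj u0 (g 3) := (ho (g 3)).mpr hadj
        have := adj_dist_le_one' h2
        have := gd0 3 (by omega)
        omega
      · rcases (hc u0).mp (Or.inr rfl) with hvu | rfl
        · have := adj_dist_le_one' hvu.symm
          omega
        · exact hv.1 rfl
  have hvne : v ≠ u0 := fun h => hv.1 h.symm
  -- w is not on the geodesic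
  have hw_not_g : ∀ i ≤ D, w ≠ g i := by
    intro i hi heq
    have hdwi : G.dist uD w = D - i := by
      rw [heq, G.dist_comm]; exact gdD i hi
    have hi2 : D - 2 ≤ i := by omega
    have hiD : i = D - 2 ∨ i = D - 1 ∨ i = D := by omega
    rcases hiD with rfl | rfl | rfl
    · -- w = g (D - 2)
      rcases hw.2 with ho | hc
      · have hadj : G.Adj w (g (D - 3)) := by
          rw [heq]
          have := gadj (D - 3) (by omega)
          rw [show D - 3 + 1 = D - 2 by omega] at this
          exact this.symm
        have h2 : G.Adj uD (g (D - 3)) := (ho (g (D - 3))).mpr hadj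
        have h3 := adj_dist_le_one' h2.symm
        have h4 := gdD (D - 3) (by omega)
        omega
      · rcases (hc uD).mp (Or.inr rfl) with hwu | hwu
        · have := adj_dist_le_one' hwu.symm
          omega
        · exact hw.1 hwu.symm
    · -- w = g (D - 1)
      rcases hw.2 with ho | hc
      · have hadj : G.Adj uD w := by
          rw [heq, ← gD]
          have := gadj (D - 1) (by omega)
          rw [show D - 1 + 1 = D by omega] at this
          exact this.symm
        exact G.irrefl ((ho w).mp hadj)
      · have hadj : G.Adj w (g (D - 2)) := by
          rw [heq]
          have := gadj (D - 2) (by omega)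
          rw [show D - 2 + 1 = D - 1 by omega] at this
          exact this.symm
        have := hadj_le ((hc (g (D - 2))).mpr (Or.inl hadj))
        have h3 := gdD (D - 2) (by omega)
        rw [G.dist_comm] at h3
        omega
    · exact hw.1 (by rw [heq, gD])
  have hw_ne_u0 : w ≠ u0 := by rw [← g0]; exact hw_not_g 0 (by omega)
  have hw_ne_uD : w ≠ uD := hw.1.symm
  have hv_ne_uD : v ≠ uD := by rw [← gD]; exact hv_not_g D le_rfl
  have huD_ne_u0 : uD ≠ u0 := by
    intro h
    rw [h, SimpleGraph.dist_self] at huD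
    omega
  have hvd : ∀ x, x ≠ u0 → x ≠ v → G.dist u0 x = G.dist v x :=
    fun x hx1 hx2 => twins_dist_eq' hG hv hx1 hx2
  have hwd : ∀ x, x ≠ uD → x ≠ w → G.dist uD x = G.dist w x :=
    fun x hx1 hx2 => twins_dist_eq' hG hw hx1 hx2
  have hvD : G.dist v uD = D := by
    have h := hvd uD huD_ne_u0 hv_ne_uD.symm
    omega
  have hw_ne_v : w ≠ v := by
    intro h
    have : G.dist uD v = G.dist v uD := G.dist_comm ..
    rw [h] at hkw
    omega
  set k := G.dist u0 v with hkdef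
  have hgk_ne_uD : g k ≠ uD := by
    rw [← gD]
    intro h
    have := ginj k (by omega) D le_rfl h
    omega
  have hgk_ne_w : g k ≠ w := fun h => hw_not_g k (by omega) h.symm
  have hdist_v_w : G.dist v w = D := by
    have h1 : G.dist u0 w = G.dist v w := hvd w hw_ne_u0 hw_ne_v
    have h2 : G.dist uD u0 = G.dist w u0 := hwd u0 (Ne.symm huD_ne_u0) hw_ne_u0.symm
    have h3 : G.dist uD u0 = D := by rw [G.dist_comm]; exact huD
    have h4 : G.dist u0 w = G.dist w u0 := G.dist_comm ..
    omega
  have hdist_gk_w : G.dist (g k) w = D - k := by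
    have h1 : G.dist uD (g k) = G.dist w (g k) := hwd (g k) hgk_ne_uD hgk_ne_w
    have h2 : G.dist (g k) uD = D - k := gdD k (by omega)
    have h3 : G.dist uD (g k) = G.dist (g k) uD := G.dist_comm ..
    have h4 : G.dist (g k) w = G.dist w (g k) := G.dist_comm ..
    omega
  -- the resolving set
  set T : Finset V := insert v ((Finset.Icc 1 D).image g) with hT
  set S : Finset V := Finset.univ \ T with hS
  have hmemT : ∀ x : V, x ∈ T ↔ (x = v ∨ ∃ i, 1 ≤ i ∧ i ≤ D ∧ g i = x) := by
    intro x
    simp only [hT, Finset.mem_insert, Finset.mem_image, Finset.mem_Icc]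
    constructor
    · rintro (rfl | ⟨i, ⟨h1, h2⟩, h3⟩)
      · exact Or.inl rfl
      · exact Or.inr ⟨i, h1, h2, h3⟩
    · rintro (rfl | ⟨i, h1, h2, h3⟩)
      · exact Or.inl rfl
      · exact Or.inr ⟨i, ⟨h1, h2⟩, h3⟩
  have hmemS : ∀ x : V, x ∈ S ↔ x ∉ T := by
    intro x
    simp [hS]
  have hu0S : u0 ∈ S := by
    rw [hmemS, hmemT]
    push_neg
    refine ⟨hvne.symm, fun i hi1 hi2 hgi => ?_⟩
    rw [← g0] at hgi
    have := ginj i hi2 0 (by omega) hgi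
    omega
  have hwS : w ∈ S := by
    rw [hmemS, hmemT]
    push_neg
    exact ⟨hw_ne_v, fun i _ hi2 hgi => hw_not_g i hi2 hgi.symm⟩
  have hvimg : v ∉ (Finset.Icc 1 D).image g := by
    simp only [Finset.mem_image, Finset.mem_Icc]
    rintro ⟨i, ⟨hi1, hi2⟩, hgi⟩
    exact hv_not_g i hi2 hgi.symm
  have hinjOn : Set.InjOn g (Finset.Icc 1 D) := by
    intro i hi j hj hij
    simp only [Finset.coe_Icc, Set.mem_Icc] at hi hj
    exact ginj i hi.2 j hj.2 hij
  have hTcard : T.card = D + 1 := by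
    rw [hT, Finset.card_insert_of_notMem hvimg, Finset.card_image_of_injOn hinjOn,
      Nat.card_Icc]
    omega
  -- key claim: S resolves pairs (v, g j)
  have hkey : ∀ j, 1 ≤ j → j ≤ D → ∃ s ∈ S, G.dist v s ≠ G.dist (g j) s := by
    intro j hj1 hj2
    by_cases hjk : j = k
    · subst hjk
      refine ⟨w, hwS, ?_⟩
      rw [hdist_v_w, hdist_gk_w]
      omega
    · refine ⟨u0, hu0S, ?_⟩
      have h1 : G.dist v u0 = k := (G.dist_comm ..).trans hkdef.symm
      have h2 : G.dist (g j) u0 = j := by rw [G.dist_comm]; exact gd0 j hj2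
      omega
  have hres : Resolves G (↑S : Set V) := by
    intro x y hxy
    by_cases hx : x ∈ T
    · by_cases hy : y ∈ T
      · rcases (hmemT x).mp hx with rfl | ⟨i, hi1, hi2, rfl⟩
        · rcases (hmemT y).mp hy with rfl | ⟨j, hj1, hj2, rfl⟩
          · exact absurd rfl hxy
          · obtain ⟨s, hs, hne⟩ := hkey j hj1 hj2
            exact ⟨s, Finset.mem_coe.mpr hs, hne⟩
        · rcases (hmemT y).mp hy with rfl | ⟨j, hj1, hj2, rfl⟩
          · obtain ⟨s, hs, hne⟩ := hkey i hi1 hi2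
            exact ⟨s, Finset.mem_coe.mpr hs, fun h => hne h.symm⟩
          · refine ⟨u0, Finset.mem_coe.mpr hu0S, ?_⟩
            have h1 : G.dist (g i) u0 = i := by rw [G.dist_comm]; exact gd0 i hi2
            have h2 : G.dist (g j) u0 = j := by rw [G.dist_comm]; exact gd0 j hj2
            have hij : i ≠ j := fun h => hxy (by rw [h])
            omega
      · refine ⟨y, Finset.mem_coe.mpr ((hmemS y).mpr hy), ?_⟩
        rw [SimpleGraph.dist_self]
        exact (hG.pos_dist_of_ne hxy).ne'
    · refine ⟨x, Finset.mem_coe.mpr ((hmemS x).mpr hx), ?_⟩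
      rw [SimpleGraph.dist_self]
      exact (hG.pos_dist_of_ne hxy.symm).ne
  have hScard : (↑S : Set V).ncard = Fintype.card V - (D + 1) := by
    rw [Set.ncard_coe_finset, hS, Finset.card_sdiff_of_subset (Finset.subset_univ T),
      Finset.card_univ, hTcard]
  have hle : metricDim G ≤ Fintype.card V - (D + 1) :=
    Nat.sInf_le ⟨↑S, hres, hScard⟩
  rw [hdim] at hle
  omega
end
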